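/- For integers $n \ge 2$ and reals $R \ge 1$, $\lambda \ge 1$, one has $\int_{\mathbb{R}^n \setminus 2\lambda R Q} |\eta|^{-(n+1)/2} \prod_{i=1}^n \langle \eta_i \rangle^{-2} \, d\eta \lesssim R^{-(n+3)/2} \lambda^{-(n+3)/2}$, where $Q$ is the unit cube $\{\max_i |\xi_i| \le 1\}$ in $\mathbb{R}^n$. -/

import Mathlib

open MeasureTheory

open Real Set in
private 
theorem tail_bound (a : ℝ) (ha : 1 ≤ a) :
    ∫ t in {t : ℝ | a < |t|}, (1+t^2)⁻¹ ≤ 2/a := by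
  have ha0 : 0 < a := by linarith
  have hint : Integrable (fun x : ℝ => (1+x^2)⁻¹) := integrable_inv_one_add_sq
  have hIoi : ∫ t in Ioi a, (1+t^2)⁻¹ ≤ a⁻¹ := by
    have h1 : ∫ t in Ioi a, (1+t^2)⁻¹ ≤ ∫ t in Ioi a, t ^ (-2 : ℝ) := by
      refine setIntegral_mono_on hint.integrableOn
        (integrableOn_Ioi_rpow_of_lt (by norm_num) ha0) measurableSet_Ioi ?_
      intro t ht
      have ht0 : 0 < t := lt_trans ha0 ht
      rw [show (-2:ℝ) = -(2:ℕ) by norm_num, Real.rpow_neg ht0.le, Real.rpow_natCast]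
      exact inv_anti₀ (by positivity) (by nlinarith)
    have h2 : ∫ t in Ioi a, t ^ (-2 : ℝ) = a⁻¹ := by
      rw [integral_Ioi_rpow_of_lt (by norm_num) ha0]; norm_num; exact Real.rpow_neg_one a
    linarith
  have hset : {t : ℝ | a < |t|} = Iio (-a) ∪ Ioi a := by
    ext t; simp [lt_abs, lt_neg, or_comm]
  have hIio : ∫ t in Iio (-a), (1+t^2)⁻¹ = ∫ t in Ioi a, (1+t^2)⁻¹ := by
    have h := integral_comp_neg_Iic (-a) (fun t : ℝ => (1+t^2)⁻¹)
    simp only [neg_neg, neg_sq] at h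
    rw [← integral_Iic_eq_integral_Iio, ← h]
  have hdisj : Disjoint (Iio (-a)) (Ioi a) := by
    rw [Set.disjoint_left]
    intro x hx hx'
    simp only [mem_Iio, mem_Ioi] at hx hx'
    linarith
  rw [hset, setIntegral_union hdisj measurableSet_Ioi hint.integrableOn hint.integrableOn, hIio]
  have h3 : a⁻¹ + a⁻¹ = 2/a := by rw [div_eq_mul_inv]; ring
  linarith

open Real Set in
/-- the integral over the complement of the cube `2λR Q` of
`|η|^{-(n+1)/2} ∏ ⟨η_i⟩⁻²` is `O(R^{-(n+3)/2} λ^{-(n+3)/2})`. -/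

theorem stmt_4 (n : ℕ) (hn : 2 ≤ n) :
    ∃ C > 0, ∀ R lam : ℝ, 1 ≤ R → 1 ≤ lam →
      (∫ η in {η : EuclideanSpace ℝ (Fin n) | ∃ i, 2 * lam * R < |η i|},
        ‖η‖ ^ (-(((n : ℝ) + 1) / 2)) * ∏ i : Fin n, (1 + (η i) ^ 2)⁻¹)
      ≤ C * R ^ (-(((n : ℝ) + 3) / 2)) * lam ^ (-(((n : ℝ) + 3) / 2)) := by
  have hπ : (0:ℝ) < π := Real.pi_pos
  refine ⟨n * π ^ (n-1), by positivity, ?_⟩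
  intro R lam hR hlam
  set a : ℝ := 2 * lam * R with ha_def
  set b : ℝ := lam * R with hb_def
  have hb1 : (1:ℝ) ≤ b := by rw [hb_def]; nlinarith
  have hb0 : (0:ℝ) < b := by linarith
  have hba : b ≤ a := by rw [ha_def, hb_def]; nlinarith
  have ha1 : (1:ℝ) ≤ a := le_trans hb1 hba
  have ha0 : (0:ℝ) < a := by linarith
  set e1 : ℝ := -(((n : ℝ) + 1) / 2) with he1
  set e2 : ℝ := -(((n : ℝ) + 3) / 2) with he2
  have he1neg : e1 ≤ 0 := by
    rw [he1]
    exact neg_nonpos.mpr (by positivity)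
  set g1 : ℝ → ℝ := fun t => (1+t^2)⁻¹ with hg1
  have hg1nonneg : ∀ t, 0 ≤ g1 t := fun t => by rw [hg1]; positivity
  have hg1int : Integrable g1 := integrable_inv_one_add_sq
  set A : Set ℝ := {t : ℝ | a < |t|} with hA_def
  have hAmeas : MeasurableSet A := (isOpen_lt continuous_const continuous_abs).measurableSet
  set P : EuclideanSpace ℝ (Fin n) → ℝ := fun η => ∏ i, g1 (η i) with hP
  have hPnonneg : ∀ η, 0 ≤ P η := fun η => Finset.prod_nonneg fun i _ => hg1nonneg _
  set T : Fin n → Set (EuclideanSpace ℝ (Fin n)) := fun i => {η | a < |η i|} with hT_def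
  set S : Set (EuclideanSpace ℝ (Fin n)) := {η | ∃ i, a < |η i|} with hS_def
  have hmeasapply : ∀ i : Fin n, Measurable fun η : EuclideanSpace ℝ (Fin n) => η i :=
    fun i => (EuclideanSpace.proj i : EuclideanSpace ℝ (Fin n) →L[ℝ] ℝ).continuous.measurable
  have hTmeas : ∀ i, MeasurableSet (T i) := by
    intro i
    exact measurableSet_lt measurable_const (hmeasapply i).abs
  have hSmeas : MeasurableSet S := by
    have : S = ⋃ i, T i := by ext η; simp [hS_def, hT_def]
    rw [this]; exact MeasurableSet.iUnion hTmeas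
  have hme := EuclideanSpace.volume_preserving_symm_measurableEquiv_toLp (Fin n)
  have hx : ∀ (x : Fin n → ℝ) (j : Fin n),
      (((MeasurableEquiv.toLp 2 (Fin n → ℝ)).symm).symm x) j = x j := by
    intro x j
    rfl
  -- P is integrable
  have hPint : Integrable P := by
    rw [← MeasurePreserving.integrable_comp_emb hme.symm
      (MeasurableEquiv.measurableEmbedding _)]
    have : (P ∘ ((MeasurableEquiv.toLp 2 (Fin n → ℝ)).symm).symm)
        = fun x : Fin n → ℝ => ∏ i, g1 (x i) := by
      ext x
      simp only [hP, Function.comp_apply]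
      exact Finset.prod_congr rfl fun j _ => by rw [hx]
    rw [this]
    exact Integrable.fintype_prod (f := fun _ : Fin n => g1) (fun i => hg1int)
  -- bound on each T i integral
  have hTbound : ∀ i, ∫ η in T i, P η ≤ (2/a) * π ^ (n-1) := by
    intro i
    have key : ∫ η in T i, P η
        = ∫ x : Fin n → ℝ, ∏ j, (if j = i then A.indicator g1 else g1) (x j) := by
      rw [← integral_indicator (hTmeas i)]
      rw [← (hme.symm).integral_comp (MeasurableEquiv.measurableEmbedding _)
        ((T i).indicator P)]
      congr 1
      ext x
      rw [Set.indicator_apply]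
      have hmemiff : (((MeasurableEquiv.toLp 2 (Fin n → ℝ)).symm).symm x ∈ T i) ↔ a < |x i| := by
        simp only [hT_def, mem_setOf_eq, hx]
      by_cases hmem : a < |x i|
      · rw [if_pos (hmemiff.mpr hmem)]
        rw [hP]
        refine Finset.prod_congr rfl fun j _ => ?_
        rw [hx]
        by_cases hji : j = i
        · subst hji
          rw [if_pos rfl, Set.indicator_of_mem (show x j ∈ A from hmem)]
        · rw [if_neg hji]
      · rw [if_neg ((not_iff_not.mpr hmemiff).mpr hmem)]
        symm
        refine Finset.prod_eq_zero (Finset.mem_univ i) ?_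
        rw [if_pos rfl, Set.indicator_of_notMem (show x i ∉ A from hmem)]
    rw [key, MeasureTheory.integral_fintype_prod_volume_eq_prod (ι := Fin n)
      (fun j => if j = i then A.indicator g1 else g1)]
    rw [← Finset.mul_prod_erase Finset.univ _ (Finset.mem_univ i)]
    have hhi : (∫ x, (if i = i then A.indicator g1 else g1) x) = ∫ t in A, g1 t := by
      rw [if_pos rfl, integral_indicator hAmeas]
    have hrest : (∏ j ∈ Finset.univ.erase i, ∫ x, (if j = i then A.indicator g1 else g1) x)
        = π ^ (n-1) := by
      rw [Finset.prod_congr rfl (fun j hj => ?_), Finset.prod_const,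
        Finset.card_erase_of_mem (Finset.mem_univ i), Finset.card_univ, Fintype.card_fin]
      rw [if_neg (Finset.ne_of_mem_erase hj)]
      exact integral_univ_inv_one_add_sq
    rw [hhi, hrest]
    have htail : ∫ t in A, g1 t ≤ 2/a := tail_bound a ha1
    have hpow : (0:ℝ) ≤ π ^ (n-1) := by positivity
    exact mul_le_mul_of_nonneg_right htail hpow
  -- step 1 : pointwise bound and reduce to ∫_S P
  have step1 : (∫ η in S, ‖η‖ ^ e1 * P η) ≤ a ^ e1 * ∫ η in S, P η := by
    rw [← integral_const_mul]
    refine integral_mono_of_nonneg (Filter.Eventually.of_forall fun η => ?_)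
      ((hPint.const_mul _).restrict) ?_
    · exact mul_nonneg (Real.rpow_nonneg (norm_nonneg _) _) (hPnonneg η)
    refine (ae_restrict_iff' hSmeas).mpr (Filter.Eventually.of_forall fun η hη => ?_)
    obtain ⟨i, hi⟩ := hη
    have hnorm : a ≤ ‖η‖ := by
      have h1 : |η i| ≤ ‖η‖ := by
        rw [EuclideanSpace.norm_eq]
        calc |η i| = Real.sqrt (‖η i‖^2) := by
              rw [Real.norm_eq_abs, Real.sqrt_sq_eq_abs, abs_abs]
          _ ≤ Real.sqrt (∑ j, ‖η j‖^2) := Real.sqrt_le_sqrt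
              (Finset.single_le_sum (f := fun j => ‖η j‖^2)
                (fun j _ => sq_nonneg _) (Finset.mem_univ i))
      have : a < |η i| := hi
      linarith
    exact mul_le_mul_of_nonneg_right
      (Real.rpow_le_rpow_of_nonpos ha0 hnorm he1neg) (hPnonneg η)
  -- step 2 : union bound
  have step2 : (∫ η in S, P η) ≤ ∑ i : Fin n, ∫ η in T i, P η := by
    rw [← integral_indicator hSmeas]
    have hrhs : (∑ i : Fin n, ∫ η in T i, P η)
        = ∫ η, ∑ i : Fin n, (T i).indicator P η := by
      rw [integral_finset_sum]
      · exact Finset.sum_congr rfl fun i _ => (integral_indicator (hTmeas i)).symm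
      · exact fun i _ => hPint.indicator (hTmeas i)
    rw [hrhs]
    refine integral_mono (hPint.indicator hSmeas)
      (integrable_finset_sum _ fun i _ => hPint.indicator (hTmeas i)) ?_
    intro η
    by_cases hη : η ∈ S
    · obtain ⟨i, hi⟩ := hη
      rw [Set.indicator_of_mem (show η ∈ S from ⟨i, hi⟩)]
      calc P η = (T i).indicator P η := (Set.indicator_of_mem (show η ∈ T i from hi) P).symm
        _ ≤ ∑ j : Fin n, (T j).indicator P η :=
            Finset.single_le_sum (fun j _ => Set.indicator_nonneg (fun x _ => hPnonneg x) _)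
              (Finset.mem_univ i)
    · rw [Set.indicator_of_notMem hη]
      exact Finset.sum_nonneg fun j _ => Set.indicator_nonneg (fun x _ => hPnonneg x) _
  -- combine
  have hsum : (∑ i : Fin n, ∫ η in T i, P η) ≤ n * ((2/a) * π ^ (n-1)) := by
    calc (∑ i : Fin n, ∫ η in T i, P η) ≤ ∑ _i : Fin n, (2/a) * π ^ (n-1) :=
          Finset.sum_le_sum fun i _ => hTbound i
      _ = n * ((2/a) * π ^ (n-1)) := by rw [Finset.sum_const, Finset.card_univ,
          Fintype.card_fin, nsmul_eq_mul]
  have ha_le : a ^ e1 ≤ b ^ e1 := Real.rpow_le_rpow_of_nonpos hb0 hba he1neg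
  have hae1 : (0:ℝ) ≤ a ^ e1 := Real.rpow_nonneg ha0.le _
  have h2a : 2/a = b⁻¹ := by
    have hab : a = 2*b := by rw [ha_def, hb_def]; ring
    rw [hab, inv_eq_one_div, div_eq_div_iff (by positivity) (ne_of_gt hb0)]
    ring
  have final : a ^ e1 * (n * ((2/a) * π ^ (n-1))) ≤ n * π ^ (n-1) * R ^ e2 * lam ^ e2 := by
    have h1 : a ^ e1 * (n * ((2/a) * π ^ (n-1))) ≤ b ^ e1 * (n * ((2/a) * π ^ (n-1))) :=
      mul_le_mul_of_nonneg_right ha_le (by positivity)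
    have h2 : b ^ e1 * (n * ((2/a) * π ^ (n-1))) = n * π ^ (n-1) * (b ^ e1 * b⁻¹) := by
      rw [h2a]; ring
    have h3 : b ^ e1 * b⁻¹ = b ^ e2 := by
      rw [← Real.rpow_neg_one b, ← Real.rpow_add hb0]
      congr 1
      rw [he1, he2]; ring
    have h4 : b ^ e2 = R ^ e2 * lam ^ e2 := by
      rw [hb_def, mul_comm lam R, Real.mul_rpow (by linarith) (by linarith)]
    calc a ^ e1 * (n * ((2/a) * π ^ (n-1))) ≤ b ^ e1 * (n * ((2/a) * π ^ (n-1))) := h1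
      _ = n * π ^ (n-1) * (b ^ e1 * b⁻¹) := h2
      _ = n * π ^ (n-1) * (R ^ e2 * lam ^ e2) := by rw [h3, h4]
      _ = n * π ^ (n-1) * R ^ e2 * lam ^ e2 := by ring
  calc (∫ η in S, ‖η‖ ^ e1 * P η) ≤ a ^ e1 * ∫ η in S, P η := step1
    _ ≤ a ^ e1 * (n * ((2/a) * π ^ (n-1))) :=
        mul_le_mul_of_nonneg_left (le_trans step2 hsum) hae1
    _ ≤ n * π ^ (n-1) * R ^ e2 * lam ^ e2 := final
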